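/- Let n ≥ 1 be an integer, h ≠ 0 a real number, and P a real polynomial of degree at most 2n. Then P′(0) = (1/(2h)) ∑_{m=1}^{n} α_m^{(1)}(n) · (P(mh) − P(−mh)). -/

import Mathlib

open Finset Polynomial

/-- `π_m(n) = ∏_{k=1, k ≠ m}^{n} (1 - m²/k²)`. -/
noncomputable def pim (n m : ℕ) : ℝ :=
  ∏ k ∈ (Finset.Icc 1 n).erase m, (1 - (m : ℝ) ^ 2 / (k : ℝ) ^ 2)

/-- `α_m^{(1)}(n) = 1 / (m · π_m(n))`. -/
noncomputable def alpha1 (n m : ℕ) : ℝ := 1 / ((m : ℝ) * pim n m)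

namespace CentralDiffAux

lemma derivative_finset_prod {ι : Type*} [DecidableEq ι] (s : Finset ι) (f : ι → Polynomial ℝ) :
    derivative (∏ i ∈ s, f i) = ∑ i ∈ s, (∏ j ∈ s.erase i, f j) * derivative (f i) := by
  induction s using Finset.induction_on with
  | empty => simp
  | insert _ _ ha ih =>
    rename_i a s
    rw [Finset.prod_insert ha, derivative_mul, ih, Finset.mul_sum, Finset.sum_insert ha,
      Finset.erase_insert ha]
    congr 1
    · exact mul_comm _ _
    · refine Finset.sum_congr rfl fun i hi => ?_
      have hai : a ≠ i := fun e => ha (e ▸ hi)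
      rw [Finset.erase_insert_of_ne hai,
        Finset.prod_insert (fun e => ha (Finset.erase_subset _ _ e)), mul_assoc]

variable (n : ℕ) (h : ℝ)

/-- the node set -/
noncomputable def s : Finset ℤ := Finset.Icc (-(n : ℤ)) n

/-- the node map -/
noncomputable def v : ℤ → ℝ := fun i => (i : ℝ) * h

lemma v_inj (hh : h ≠ 0) : Function.Injective (v h) := fun a b e => by
  have : (a : ℝ) = b := by
    have := mul_right_cancel₀ hh e
    exact this
  exact_mod_cast this

lemma mem_s {i : ℤ} : i ∈ s n ↔ -(n : ℤ) ≤ i ∧ i ≤ n := Finset.mem_Icc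

lemma card_s : (s n).card = 2 * n + 1 := by
  rw [s, Int.card_Icc]; omega

/-- basis symmetry under negation -/
lemma basis_neg (i : ℤ) :
    Lagrange.basis (s n) (v h) (-i) = (Lagrange.basis (s n) (v h) i).comp (-X) := by
  rw [Lagrange.basis, Lagrange.basis, Polynomial.prod_comp]
  refine Finset.prod_nbij' (fun j => -j) (fun j => -j) ?_ ?_ (by intro a _; ring) (by intro a _; ring) ?_
  · intro j hj
    simp only [Finset.mem_erase, mem_s] at hj ⊢
    omega
  · intro j hj
    simp only [Finset.mem_erase, mem_s] at hj ⊢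
    omega
  · intro j hj
    show Lagrange.basisDivisor (v h (-i)) (v h j) = (Lagrange.basisDivisor (v h i) (v h (-j))).comp (-X)
    have h1 : v h (-i) = -(v h i) := by simp only [v, Int.cast_neg]; ring
    have h2 : v h (-j) = -(v h j) := by simp only [v, Int.cast_neg]; ring
    rw [Lagrange.basisDivisor, Lagrange.basisDivisor, h1, h2, mul_comp, C_comp, sub_comp,
      X_comp, C_comp]
    have h3 : (-(v h i) - v h j) = -(v h i - -(v h j)) := by ring
    rw [h3, inv_neg]
    simp only [map_neg]
    ring

/-- derivative of basis at zero -/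
noncomputable def d (i : ℤ) : ℝ := (derivative (Lagrange.basis (s n) (v h) i)).eval 0

lemma d_neg (i : ℤ) : d n h (-i) = - d n h i := by
  rw [d, d, basis_neg, derivative_comp]
  simp [eval_comp]

lemma d_zero : d n h 0 = 0 := by
  have := d_neg n h 0
  simp only [neg_zero] at this
  linarith



lemma pim_ne_zero (n m : ℕ) (hm1 : 1 ≤ m) (hm2 : m ≤ n) : pim n m ≠ 0 := by
  rw [pim, Finset.prod_ne_zero_iff]
  intro k hk
  simp only [Finset.mem_erase, Finset.mem_Icc] at hk
  obtain ⟨hkm, hk1, hkn⟩ := hk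
  have hk0 : (k : ℝ) ≠ 0 := Nat.cast_ne_zero.mpr (by omega)
  have : (m : ℝ) ^ 2 ≠ (k : ℝ) ^ 2 := by
    intro e
    have : (m : ℝ) = k := by
      nlinarith [Nat.cast_nonneg (α := ℝ) m, Nat.cast_nonneg (α := ℝ) k]
    exact hkm (by exact_mod_cast this.symm)
  intro e
  apply this
  field_simp at e
  linarith

lemma d_pos (hh : h ≠ 0) (m : ℕ) (hm1 : 1 ≤ m) (hm2 : m ≤ n) :
    d n h (m : ℤ) = alpha1 n m / (2 * h) := by
  have hm0 : ((m : ℤ) : ℝ) ≠ 0 := by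
    exact_mod_cast (by omega : ((m:ℤ)) ≠ 0)
  have h0t : (0 : ℤ) ∈ (s n).erase (m : ℤ) := by
    simp only [Finset.mem_erase, mem_s]
    constructor
    · exact_mod_cast (by omega : ¬ ((0:ℤ) = m)) 
    · omega
  rw [d, Lagrange.basis, derivative_finset_prod, eval_finset_sum]
  rw [Finset.sum_eq_single_of_mem 0 h0t ?side]
  case side =>
    intro b hb hb0
    rw [eval_mul, eval_prod]
    apply mul_eq_zero_of_left
    apply Finset.prod_eq_zero (i := (0 : ℤ))
    · exact Finset.mem_erase.mpr ⟨Ne.symm hb0, h0t⟩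
    · have : v h 0 = 0 := by simp [v]
      rw [this]
      simpa using Lagrange.eval_basisDivisor_right (x := v h b) (y := (0:ℝ)) ▸ rfl
  -- the surviving term
  have hv0 : v h 0 = 0 := by simp [v]
  have hvm : v h (m : ℤ) = (m : ℝ) * h := by simp [v]
  rw [eval_mul, eval_prod]
  have hder : (derivative (Lagrange.basisDivisor (v h (m : ℤ)) (v h 0))).eval 0
      = ((m : ℝ) * h)⁻¹ := by
    rw [Lagrange.basisDivisor, derivative_C_mul]
    simp [hv0, hvm]
  rw [hder]
  set g : ℤ → ℝ := fun a => (Lagrange.basisDivisor (v h (m : ℤ)) (v h a)).eval 0 with hg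
  show (∏ a ∈ ((s n).erase (m : ℤ)).erase 0, g a) * ((m : ℝ) * h)⁻¹ = alpha1 n m / (2 * h)
  have hgval : ∀ a : ℤ, g a = ((m : ℝ) * h - (a : ℝ) * h)⁻¹ * (-((a : ℝ) * h)) := by
    intro a
    rw [hg]
    simp only [Lagrange.basisDivisor, eval_mul, eval_C, eval_sub, eval_X, hvm]
    show ((m : ℝ) * h - v h a)⁻¹ * (0 - v h a) = _
    simp only [v]
    ring_nf
  have hu : ((s n).erase (m : ℤ)).erase 0
      = (Finset.Icc (-(n : ℤ)) (-1)) ∪ ((Finset.Icc (1 : ℤ) n).erase (m : ℤ)) := by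
    ext a
    simp only [Finset.mem_erase, mem_s, Finset.mem_union, Finset.mem_Icc]
    omega
  have hdisj : Disjoint (Finset.Icc (-(n : ℤ)) (-1)) ((Finset.Icc (1 : ℤ) n).erase (m : ℤ)) := by
    rw [Finset.disjoint_left]
    intro a ha hb
    simp only [Finset.mem_Icc, Finset.mem_erase] at ha hb
    omega
  rw [hu, Finset.prod_union hdisj]
  have hneg : ∏ a ∈ Finset.Icc (-(n : ℤ)) (-1), g a = ∏ k ∈ Finset.Icc (1 : ℤ) n, g (-k) := by
    refine Finset.prod_nbij' (fun a => -a) (fun a => -a) ?_ ?_ (by intro a _; ring)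
      (by intro a _; ring) ?_
    · intro a ha; simp only [Finset.mem_Icc] at ha ⊢; omega
    · intro a ha; simp only [Finset.mem_Icc] at ha ⊢; omega
    · intro a ha; simp only [neg_neg]
  have hmmem : (m : ℤ) ∈ Finset.Icc (1 : ℤ) n := by simp only [Finset.mem_Icc]; omega
  rw [hneg, ← Finset.mul_prod_erase _ _ hmmem]
  have hgm : g (-(m : ℤ)) = 1 / 2 := by
    rw [hgval]
    push_cast
    rw [neg_mul, sub_neg_eq_add, neg_neg]
    rw [show (m : ℝ) * h + (m : ℝ) * h = 2 * ((m : ℝ) * h) by ring]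
    rw [mul_inv]
    field_simp
  have hmR : ((m : ℤ) : ℝ) ≠ 0 := hm0
  have hpair : ∀ k ∈ (Finset.Icc (1 : ℤ) n).erase (m : ℤ),
      g (-k) * g k = (1 - (m : ℝ) ^ 2 / ((k : ℤ) : ℝ) ^ 2)⁻¹ := by
    intro k hk
    simp only [Finset.mem_erase, Finset.mem_Icc] at hk
    obtain ⟨hkm, hk1, hkn⟩ := hk
    have hk0 : ((k : ℤ) : ℝ) ≠ 0 := by exact_mod_cast (by omega : (k : ℤ) ≠ 0)
    have hkpos : (0 : ℝ) < (k : ℤ) := by exact_mod_cast (by omega : (0 : ℤ) < k)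
    have hmpos : (0 : ℝ) < ((m : ℤ) : ℝ) := by exact_mod_cast (by omega : (0 : ℤ) < (m : ℤ))
    have hsum : ((m : ℤ) : ℝ) + ((k : ℤ) : ℝ) ≠ 0 := by positivity
    have hdiff : ((m : ℤ) : ℝ) - ((k : ℤ) : ℝ) ≠ 0 := by
      intro e
      exact hkm (by exact_mod_cast (by linarith : ((k : ℤ) : ℝ) = ((m : ℤ) : ℝ)))
    have hne1 : ((k : ℤ) : ℝ) ^ 2 - (m : ℝ) ^ 2 ≠ 0 := by
      have e : ((k : ℤ) : ℝ) ^ 2 - (m : ℝ) ^ 2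
          = (((k : ℤ) : ℝ) - ((m : ℤ) : ℝ)) * (((k : ℤ) : ℝ) + ((m : ℤ) : ℝ)) := by
        push_cast; ring
      rw [e]
      exact mul_ne_zero (fun e2 => hdiff (by linarith)) (fun e2 => hsum (by linarith))
    have hD2 : -(((k : ℤ) : ℝ) ^ 2 * h ^ 2) + h ^ 2 * (m : ℝ) ^ 2 ≠ 0 := by
      have e : -(((k : ℤ) : ℝ) ^ 2 * h ^ 2) + h ^ 2 * (m : ℝ) ^ 2
          = -(h ^ 2) * (((k : ℤ) : ℝ) ^ 2 - (m : ℝ) ^ 2) := by ring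
      rw [e]
      exact mul_ne_zero (neg_ne_zero.mpr (pow_ne_zero 2 hh)) hne1
    rw [hgval, hgval]
    push_cast at hsum hdiff hne1 hD2 ⊢
    field_simp [hne1, hD2]
    have hA : (m : ℝ) * h + ((k : ℤ) : ℝ) * h ≠ 0 := by
      have e : (m : ℝ) * h + ((k : ℤ) : ℝ) * h = ((m : ℝ) + ((k : ℤ) : ℝ)) * h := by ring
      rw [e]; exact mul_ne_zero hsum hh
    have hB : (m : ℝ) * h - ((k : ℤ) : ℝ) * h ≠ 0 := by
      have e : (m : ℝ) * h - ((k : ℤ) : ℝ) * h = ((m : ℝ) - ((k : ℤ) : ℝ)) * h := by ring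
      rw [e]; exact mul_ne_zero hdiff hh
    rw [neg_eq_iff_eq_neg, div_eq_iff (show (m:ℝ) - -((k:ℤ):ℝ) ≠ 0 by rw [sub_neg_eq_add]; exact hsum)]
    ring
  rw [mul_assoc (g (-(m : ℤ))), ← Finset.prod_mul_distrib, Finset.prod_congr rfl hpair, hgm]
  have hcast : ∏ k ∈ (Finset.Icc (1 : ℤ) n).erase (m : ℤ), (1 - (m : ℝ) ^ 2 / ((k : ℤ) : ℝ) ^ 2)⁻¹
      = ∏ k ∈ (Finset.Icc 1 n).erase m, (1 - (m : ℝ) ^ 2 / (k : ℝ) ^ 2)⁻¹ := by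
    refine Finset.prod_nbij' (fun a => a.toNat) (fun a => (a : ℤ)) ?_ ?_ ?_ ?_ ?_
    · intro a ha
      simp only [Finset.mem_erase, Finset.mem_Icc] at ha ⊢
      omega
    · intro a ha
      simp only [Finset.mem_erase, Finset.mem_Icc] at ha ⊢
      omega
    · intro a ha
      simp only [Finset.mem_erase, Finset.mem_Icc] at ha
      show ((a.toNat : ℤ)) = a
      omega
    · intro a _
      show (((a : ℤ)).toNat) = a
      omega
    · intro a ha
      simp only [Finset.mem_erase, Finset.mem_Icc] at ha
      have h1 : ((a.toNat : ℤ)) = a := Int.toNat_of_nonneg (by omega)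
      have h2 : ((a.toNat : ℕ) : ℝ) = ((a : ℤ) : ℝ) := by exact_mod_cast congrArg (Int.cast : ℤ → ℝ) h1
      show (1 - (m : ℝ) ^ 2 / ((a : ℤ) : ℝ) ^ 2)⁻¹ = (1 - (m : ℝ) ^ 2 / ((a.toNat : ℕ) : ℝ) ^ 2)⁻¹
      rw [h2]
  rw [hcast, Finset.prod_inv_distrib]
  rw [show (∏ k ∈ (Finset.Icc 1 n).erase m, (1 - (m : ℝ) ^ 2 / (k : ℝ) ^ 2)) = pim n m from rfl]
  have hpne := pim_ne_zero n m hm1 hm2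
  rw [alpha1]
  have hmK : (m : ℝ) ≠ 0 := by exact_mod_cast hm0
  field_simp


lemma main_sum (hn : 1 ≤ n) (hh : h ≠ 0) (P : Polynomial ℝ) (hP : P.degree ≤ 2 * n) :
    (Polynomial.derivative P).eval 0 =
      (1 / (2 * h)) *
        ∑ m ∈ Finset.Icc 1 n, alpha1 n m * (P.eval ((m : ℝ) * h) - P.eval (-((m : ℝ) * h))) := by
  classical
  have hinj : Set.InjOn (v h) (s n) := (v_inj h hh).injOn
  have hdeg : P.degree < ((s n).card : WithBot ℕ) := by
    rw [card_s]
    refine lt_of_le_of_lt hP ?_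
    norm_cast
    omega
  have hkey := Lagrange.eq_interpolate hinj hdeg
  have hrep : (derivative P).eval 0 = ∑ i ∈ s n, P.eval (v h i) * d n h i := by
    conv_lhs => rw [hkey]
    rw [Lagrange.interpolate_apply, derivative_sum, eval_finset_sum]
    refine Finset.sum_congr rfl fun i hi => ?_
    rw [derivative_C_mul, eval_mul, eval_C]
    rfl
  have h0mem : (0 : ℤ) ∈ s n := by rw [mem_s]; omega
  rw [hrep, ← Finset.add_sum_erase _ _ h0mem, d_zero, mul_zero, zero_add]
  have hesplit : (s n).erase 0 = Finset.Icc (-(n : ℤ)) (-1) ∪ Finset.Icc (1 : ℤ) n := by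
    ext a
    simp only [Finset.mem_erase, mem_s, Finset.mem_union, Finset.mem_Icc]
    omega
  have hdisj2 : Disjoint (Finset.Icc (-(n : ℤ)) (-1)) (Finset.Icc (1 : ℤ) n) := by
    rw [Finset.disjoint_left]
    intro a ha hb
    simp only [Finset.mem_Icc] at ha hb
    omega
  have hnegsum : ∑ a ∈ Finset.Icc (-(n : ℤ)) (-1), P.eval (v h a) * d n h a
      = ∑ k ∈ Finset.Icc (1 : ℤ) n, P.eval (v h (-k)) * d n h (-k) := by
    refine Finset.sum_nbij' (fun a => -a) (fun a => -a) ?_ ?_ (by intro a _; ring)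
      (by intro a _; ring) ?_
    · intro a ha; simp only [Finset.mem_Icc] at ha ⊢; omega
    · intro a ha; simp only [Finset.mem_Icc] at ha ⊢; omega
    · intro a ha; simp only [neg_neg]
  rw [hesplit, Finset.sum_union hdisj2, hnegsum, ← Finset.sum_add_distrib]
  have hterm : ∀ k ∈ Finset.Icc (1 : ℤ) n,
      P.eval (v h (-k)) * d n h (-k) + P.eval (v h k) * d n h k
      = alpha1 n k.toNat / (2 * h)
          * (P.eval ((k.toNat : ℝ) * h) - P.eval (-((k.toNat : ℝ) * h))) := by
    intro k hk
    simp only [Finset.mem_Icc] at hk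
    have hkk : ((k.toNat : ℕ) : ℤ) = k := Int.toNat_of_nonneg (by omega)
    have hm1 : 1 ≤ k.toNat := by omega
    have hm2 : k.toNat ≤ n := by omega
    have hd : d n h k = alpha1 n k.toNat / (2 * h) := by
      rw [← hkk]; exact d_pos n h hh k.toNat hm1 hm2
    have hc : ((k.toNat : ℕ) : ℝ) = ((k : ℤ) : ℝ) := by exact_mod_cast congrArg (Int.cast : ℤ → ℝ) hkk
    have hv1 : v h k = (k.toNat : ℝ) * h := by simp only [v]; rw [hc]
    have hv2 : v h (-k) = -((k.toNat : ℝ) * h) := by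
      simp only [v]; rw [hc, Int.cast_neg]; ring
    rw [d_neg, hd, hv1, hv2]
    ring
  rw [Finset.sum_congr rfl hterm, Finset.mul_sum]
  refine Finset.sum_nbij' (fun a => a.toNat) (fun a => (a : ℤ)) ?_ ?_ ?_ ?_ ?_
  · intro a ha; simp only [Finset.mem_Icc] at ha ⊢; omega
  · intro a ha; simp only [Finset.mem_Icc] at ha ⊢; omega
  · intro a ha
    simp only [Finset.mem_Icc] at ha
    show ((a.toNat : ℤ)) = a
    omega
  · intro a _
    show (((a : ℤ)).toNat) = a
    omega
  · intro a ha
    simp only [Finset.mem_Icc] at ha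
    show alpha1 n a.toNat / (2 * h) * (P.eval ((a.toNat : ℝ) * h) - P.eval (-((a.toNat : ℝ) * h)))
      = 1 / (2 * h) * (alpha1 n a.toNat * (P.eval ((a.toNat : ℝ) * h) - P.eval (-((a.toNat : ℝ) * h))))
    ring

end CentralDiffAux

/-- for every `n ≥ 1`, `h ≠ 0` and real polynomial `P` of degree at most `2n`,
`P′(0) = (1/(2h)) ∑_{m=1}^{n} α_m^{(1)}(n) (P(mh) - P(-mh))`. -/
theorem central_diff_first_deriv_exact (n : ℕ) (hn : 1 ≤ n) (h : ℝ) (hh : h ≠ 0)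
    (P : Polynomial ℝ) (hP : P.degree ≤ 2 * n) :
    (Polynomial.derivative P).eval 0 =
      (1 / (2 * h)) *
        ∑ m ∈ Finset.Icc 1 n, alpha1 n m * (P.eval ((m : ℝ) * h) - P.eval (-((m : ℝ) * h))) := by
  exact CentralDiffAux.main_sum n h hn hh P hP
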